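/- Let a_1,...,a_n be positive integers with least common multiple M, b a nonnegative integer, r the remainder of b modulo M, and b' = ⌊b/M⌋. Define l_i = P'(r + (i−1)M) for i = 1,...,n, where P'(c) is the number of nonnegative integer solutions of ∑_{j=1}^n a_j t_j = c subject to 0 ≤ t_j ≤ M/a_j − 1 for all j. Then the number P(b) of nonnegative integer solutions of ∑_{i=1}^n a_i x_i = b equals ∑_{i=1}^n l_i · C(b' + 2 − i; n−1), where C(m; n−1) = (1/(n−1)!)·m(m+1)···(m+n−2) if m > 0 and 0 otherwise. -/
import Mathlib

lemma finite_of_bdd {n : ℕ} (P : (Fin n → ℕ) → Prop) (C : ℕ)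
    (h : ∀ x, P x → ∀ j, x j ≤ C) : Finite {x : Fin n → ℕ // P x} := by
  apply Finite.of_injective
    (fun x : {x // P x} => (fun j => (⟨x.1 j, Nat.lt_succ_of_le (h x.1 x.2 j)⟩ : Fin (C+1))))
  intro x y hxy
  ext j
  exact congrArg Fin.val (congrFun hxy j)

lemma natCard_sigma {ι : Type*} [Fintype ι] {β : ι → Type*} [∀ i, Finite (β i)] :
    Nat.card (Σ i, β i) = ∑ i, Nat.card (β i) := by
  haveI := fun i => Fintype.ofFinite (β i)
  simp [Nat.card_eq_fintype_card, Fintype.card_sigma]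

lemma card_tuple_sum : ∀ (m s : ℕ),
    Nat.card {y : Fin (m+1) → ℕ // ∑ j, y j = s} = (s + m).choose m
  | 0, s => by
    rw [Nat.card_eq_one_iff_unique.mpr]
    · simp
    constructor
    · constructor
      intro ⟨y, hy⟩ ⟨z, hz⟩
      rw [Fin.sum_univ_one] at hy hz
      apply Subtype.ext; funext j
      have hj2 := j.2
      have hj : j = 0 := Fin.ext (by omega)
      show y j = z j
      rw [hj]; exact hy.trans hz.symm
    · exact ⟨⟨fun _ => s, by simp⟩⟩
  | (m+1), s => by
    have key : ∀ y : Fin (m+2) → ℕ, ∑ j, y j = y 0 + ∑ j : Fin (m+1), y j.succ :=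
      fun y => Fin.sum_univ_succ y
    have hfin : ∀ k : Fin (s+1), Finite {y : Fin (m+1) → ℕ // ∑ j, y j = s - k.1} := by
      intro k
      apply finite_of_bdd _ s
      intro y hy j
      have h := Finset.single_le_sum (f := y) (fun _ _ => Nat.zero_le _) (Finset.mem_univ j)
      omega
    have E : {y : Fin (m+2) → ℕ // ∑ j, y j = s} ≃
        Σ k : Fin (s+1), {y : Fin (m+1) → ℕ // ∑ j, y j = s - k.1} := by
      refine ⟨fun y => ⟨⟨y.1 0, ?_⟩, ⟨fun j => y.1 j.succ, ?_⟩⟩,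
        fun p => ⟨Fin.cons p.1.1 p.2.1, ?_⟩, ?_, ?_⟩
      · have h := y.2; rw [key] at h; omega
      · show ∑ j : Fin (m+1), y.1 j.succ = s - y.1 0
        have h := y.2; rw [key] at h; omega
      · rw [key]
        simp only [Fin.cons_zero, Fin.cons_succ]
        have h := p.2.2
        have hk := p.1.2
        omega
      · intro y
        apply Subtype.ext
        exact Fin.cons_self_tail y.1
      · rintro ⟨k, y⟩
        refine Sigma.ext (by simp) ?_
        apply heq_of_eq
        apply Subtype.ext
        funext j
        simp
    rw [Nat.card_congr E, natCard_sigma]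
    have step : ∀ k : Fin (s+1), Nat.card {y : Fin (m+1) → ℕ // ∑ j, y j = s - k.1}
        = (s - k.1 + m).choose m := fun k => card_tuple_sum m (s - k.1)
    rw [Finset.sum_congr rfl (fun k _ => step k)]
    rw [Fin.sum_univ_eq_sum_range (fun k => (s - k + m).choose m) (s+1)]
    rw [← Finset.sum_range_reflect]
    have h1 : ∀ j ∈ Finset.range (s+1), (s - (s + 1 - 1 - j) + m).choose m = (j + m).choose m := by
      intro j hj
      simp only [Finset.mem_range] at hj
      congr 2
      omega
    rw [Finset.sum_congr rfl h1]
    have hockey : ∀ u : ℕ, ∑ j ∈ Finset.range (u+1), (j + m).choose m = (u + m + 1).choose (m+1) := by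
      intro u
      induction u with
      | zero => simp
      | succ u ih =>
        rw [Finset.sum_range_succ, ih]
        have e1 : u + 1 + m = u + m + 1 := by ring
        rw [e1, Nat.choose_succ_succ (u+m+1) m]
        simp only [Nat.succ_eq_add_one]
        omega
    rw [hockey]
    congr 1

/-- `C(m; j)` : equals `(1/j!)·m(m+1)···(m+j-1)` if `m > 0`, and `0` otherwise. -/
def Cm (m : ℤ) (j : ℕ) : ℕ := if 0 < m then Nat.choose (m.toNat + j - 1) j else 0


theorem stmt8 (n : ℕ) (hn : 2 ≤ n) (a : Fin n → ℕ) (ha : ∀ i, 0 < a i) (M : ℕ)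
    (hM : M = Finset.univ.lcm a) (b : ℕ) :
    Nat.card {x : Fin n → ℕ // ∑ i, a i * x i = b} =
      ∑ i ∈ Finset.Icc 1 n,
        (Nat.card {t : Fin n → ℕ // (∑ j, a j * t j = b % M + (i - 1) * M) ∧
            ∀ j, t j ≤ M / a j - 1}) *
          Cm ((b / M : ℕ) + 2 - (i : ℤ)) (n - 1) := by
  obtain ⟨m, rfl⟩ : ∃ m, n = m + 1 := ⟨n - 1, by omega⟩
  have hdvd : ∀ j, a j ∣ M := fun j => hM ▸ Finset.dvd_lcm (Finset.mem_univ j)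
  have hMpos : 0 < M := by
    rcases Nat.eq_zero_or_pos M with h0 | h
    · exfalso
      rw [hM, Finset.lcm_eq_zero_iff] at h0
      obtain ⟨j, -, hj⟩ := h0
      exact absurd (hj ▸ ha j) (by omega)
    · exact h
  have had : ∀ j, a j * (M / a j) = M := fun j => Nat.mul_div_cancel' (hdvd j)
  have hdpos : ∀ j, 0 < M / a j := fun j => Nat.div_pos (Nat.le_of_dvd hMpos (hdvd j)) (ha j)
  have split : ∀ x : Fin (m+1) → ℕ,
      ∑ j, a j * x j = ∑ j, a j * (x j % (M / a j)) + M * ∑ j, x j / (M / a j) := by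
    intro x
    rw [Finset.mul_sum, ← Finset.sum_add_distrib]
    apply Finset.sum_congr rfl
    intro j _
    conv_lhs => rw [← Nat.mod_add_div (x j) (M / a j)]
    rw [Nat.mul_add, ← mul_assoc, had j]
  have hfin : Finite {x : Fin (m+1) → ℕ // ∑ i, a i * x i = b} := by
    apply finite_of_bdd _ b
    intro x hx j
    have h1 : a j * x j ≤ b := hx ▸ Finset.single_le_sum
      (f := fun j => a j * x j) (fun _ _ => Nat.zero_le _) (Finset.mem_univ j)
    have h2 := ha j
    calc x j ≤ a j * x j := Nat.le_mul_of_pos_left _ h2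
    _ ≤ b := h1
  have hSlt : ∀ x : Fin (m+1) → ℕ, ∑ j, a j * (x j % (M / a j)) < (m+1) * M := by
    intro x
    have h1 : ∀ j, a j * (x j % (M / a j)) ≤ M - 1 := by
      intro j
      have h2 : x j % (M / a j) ≤ M / a j - 1 := by
        have := Nat.mod_lt (x j) (hdpos j); omega
      have h3 : a j * (x j % (M / a j)) ≤ a j * (M / a j - 1) :=
        Nat.mul_le_mul_left _ h2
      obtain ⟨e, he⟩ : ∃ e, M / a j = e + 1 := ⟨M / a j - 1, by have := hdpos j; omega⟩
      have h4 : a j * (M / a j - 1) + a j = M := by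
        rw [he, Nat.add_sub_cancel]
        have h5 := had j
        rw [he] at h5
        have h6 : a j * (e + 1) = a j * e + a j := by ring
        omega
      have := ha j
      omega
    calc ∑ j, a j * (x j % (M / a j)) ≤ ∑ _j : Fin (m+1), (M-1) :=
        Finset.sum_le_sum (fun j _ => h1 j)
    _ = (m+1) * (M-1) := by simp [mul_comm]
    _ < (m+1) * M := mul_lt_mul_of_pos_left (by omega) (by omega)
  let g : {x : Fin (m+1) → ℕ // ∑ i, a i * x i = b} → Fin (m+1) :=
    fun z => ⟨(∑ j, a j * (z.1 j % (M / a j))) / M, by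
      rw [Nat.div_lt_iff_lt_mul hMpos]; exact hSlt z.1⟩
  have hfiber : ∀ i : Fin (m+1),
      Nat.card {z : {x : Fin (m+1) → ℕ // ∑ i, a i * x i = b} // g z = i}
        = Nat.card {t : Fin (m+1) → ℕ //
            (∑ j, a j * t j = b % M + i.1 * M) ∧ ∀ j, t j ≤ M / a j - 1}
          * Nat.card {y : Fin (m+1) → ℕ // b % M + i.1 * M + M * ∑ j, y j = b} := by
    intro i
    rw [← Nat.card_prod]
    have key1 : ∀ z : {z : {x : Fin (m+1) → ℕ // ∑ i, a i * x i = b} // g z = i},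
        (∑ j, a j * (z.1.1 j % (M / a j)) = b % M + i.1 * M)
          ∧ ∀ j, z.1.1 j % (M / a j) ≤ M / a j - 1 := by
      intro z
      have hx := z.1.2
      have hsplit := split z.1.1
      rw [hx] at hsplit
      have hz : (∑ j, a j * (z.1.1 j % (M / a j))) / M = i.1 := congrArg Fin.val z.2
      have hmod : (∑ j, a j * (z.1.1 j % (M / a j))) % M = b % M := by
        have h9 := Nat.add_mul_mod_self_left (∑ j, a j * (z.1.1 j % (M / a j))) M
          (∑ j, z.1.1 j / (M / a j))
        rw [← hsplit] at h9
        exact h9.symm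
      constructor
      · have h5 := Nat.div_add_mod (∑ j, a j * (z.1.1 j % (M / a j))) M
        rw [← hz, mul_comm ((∑ j, a j * (z.1.1 j % (M / a j))) / M) M]
        omega
      · intro j
        have := Nat.mod_lt (z.1.1 j) (hdpos j)
        omega
    have key2 : ∀ z : {z : {x : Fin (m+1) → ℕ // ∑ i, a i * x i = b} // g z = i},
        b % M + i.1 * M + M * ∑ j, z.1.1 j / (M / a j) = b := by
      intro z
      have hx := z.1.2
      have hsplit := split z.1.1
      rw [hx] at hsplit
      have h1 := (key1 z).1
      omega
    have key3 : ∀ t y : Fin (m+1) → ℕ,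
        (∑ j, a j * t j = b % M + i.1 * M) →
        (b % M + i.1 * M + M * ∑ j, y j = b) →
        ∑ j, a j * (t j + (M / a j) * y j) = b := by
      intro t y ht1 hy
      have hpt : ∀ j, a j * (t j + (M / a j) * y j) = a j * t j + M * y j := by
        intro j
        rw [Nat.mul_add, ← mul_assoc, had j]
      rw [Finset.sum_congr rfl (fun j _ => hpt j), Finset.sum_add_distrib,
        ← Finset.mul_sum, ht1]
      exact hy
    have hmodkey : ∀ t y : Fin (m+1) → ℕ, (∀ j, t j ≤ M / a j - 1) →
        ∀ j, (t j + (M / a j) * y j) % (M / a j) = t j := by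
      intro t y ht2 j
      rw [Nat.add_mul_mod_self_left]
      exact Nat.mod_eq_of_lt (by have := ht2 j; have := hdpos j; omega)
    have key4 : ∀ t y : Fin (m+1) → ℕ,
        (∑ j, a j * t j = b % M + i.1 * M) → (∀ j, t j ≤ M / a j - 1) →
        (∑ j, a j * ((t j + (M / a j) * y j) % (M / a j))) / M = i.1 := by
      intro t y ht1 ht2
      rw [Finset.sum_congr rfl (fun j _ => by rw [hmodkey t y ht2 j]), ht1, mul_comm,
        Nat.add_mul_div_left _ _ hMpos, Nat.div_eq_of_lt (Nat.mod_lt b hMpos), zero_add]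
    have hdivkey : ∀ t y : Fin (m+1) → ℕ, (∀ j, t j ≤ M / a j - 1) →
        ∀ j, (t j + (M / a j) * y j) / (M / a j) = y j := by
      intro t y ht2 j
      rw [Nat.add_mul_div_left _ _ (hdpos j),
        Nat.div_eq_of_lt (by have := ht2 j; have := hdpos j; omega), zero_add]
    apply Nat.card_congr
    refine ⟨fun z => (⟨fun j => z.1.1 j % (M / a j), key1 z⟩,
        ⟨fun j => z.1.1 j / (M / a j), key2 z⟩),
      fun p => ⟨⟨fun j => p.1.1 j + (M / a j) * p.2.1 j,
        key3 p.1.1 p.2.1 p.1.2.1 p.2.2⟩,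
        Fin.ext (key4 p.1.1 p.2.1 p.1.2.1 p.1.2.2)⟩, ?_, ?_⟩
    · intro z
      apply Subtype.ext
      apply Subtype.ext
      funext j
      exact Nat.mod_add_div (z.1.1 j) (M / a j)
    · rintro ⟨⟨t, ht1, ht2⟩, ⟨y, hy⟩⟩
      refine Prod.ext ?_ ?_
      · apply Subtype.ext; funext j; exact hmodkey t y ht2 j
      · apply Subtype.ext; funext j; exact hdivkey t y ht2 j
  have hY : ∀ i : Fin (m+1),
      Nat.card {y : Fin (m+1) → ℕ // b % M + i.1 * M + M * ∑ j, y j = b}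
        = Cm ((b / M : ℕ) + 1 - (i.1 : ℤ)) m := by
    intro i
    by_cases hib : i.1 ≤ b / M
    · have E3 : {y : Fin (m+1) → ℕ // b % M + i.1 * M + M * ∑ j, y j = b}
          ≃ {y : Fin (m+1) → ℕ // ∑ j, y j = b / M - i.1} := by
        apply Equiv.subtypeEquivRight
        intro y
        have hb := Nat.div_add_mod b M
        constructor
        · intro h
          have hexp : M * (i.1 + ∑ j, y j) = i.1 * M + M * ∑ j, y j := by ring
          have hmm : M * (i.1 + ∑ j, y j) = M * (b / M) := by omega
          have := Nat.eq_of_mul_eq_mul_left hMpos hmm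
          omega
        · intro h
          rw [h]
          have h6 : M * (b / M) = M * i.1 + M * (b / M - i.1) := by
            rw [← Nat.mul_add]; congr 1; omega
          have h7 : i.1 * M = M * i.1 := mul_comm _ _
          omega
      rw [Nat.card_congr E3, card_tuple_sum m (b / M - i.1), Cm, if_pos (by omega)]
      rw [show (((b / M : ℕ) : ℤ) + 1 - (i.1 : ℤ)).toNat = b / M + 1 - i.1 from by omega]
      congr 1
      omega
    · have hE : IsEmpty {y : Fin (m+1) → ℕ // b % M + i.1 * M + M * ∑ j, y j = b} := by
        constructor
        rintro ⟨y, hy⟩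
        have hb := Nat.div_add_mod b M
        have h7 : i.1 * M = M * i.1 := mul_comm _ _
        have hmm : M * i.1 ≤ M * (b / M) := by omega
        exact hib (Nat.le_of_mul_le_mul_left hmm hMpos)
      rw [Nat.card_of_isEmpty, Cm, if_neg (by omega)]
  have reindex : ∀ (f : ℕ → ℕ),
      ∑ i ∈ Finset.Icc 1 (m+1), f i = ∑ i : Fin (m+1), f (i.1 + 1) := by
    intro f
    apply Finset.sum_nbij' (fun k => (⟨min (k - 1) m, by omega⟩ : Fin (m+1)))
      (fun i => i.1 + 1)
    · intro k _; exact Finset.mem_univ _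
    · intro x _
      have := x.2
      simp only [Finset.mem_Icc]
      omega
    · intro k hk
      simp only [Finset.mem_Icc] at hk
      show min (k - 1) m + 1 = k
      omega
    · intro x _
      apply Fin.ext
      show min (x.1 + 1 - 1) m = x.1
      have := x.2
      omega
    · intro k hk
      simp only [Finset.mem_Icc] at hk
      have hmin : min (k - 1) m + 1 = k := by omega
      show f k = f (min (k - 1) m + 1)
      rw [hmin]
  have hcard1 : Nat.card {x : Fin (m+1) → ℕ // ∑ i, a i * x i = b}
      = ∑ i : Fin (m+1),
          Nat.card {z : {x : Fin (m+1) → ℕ // ∑ i, a i * x i = b} // g z = i} := by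
    rw [Nat.card_congr (Equiv.sigmaFiberEquiv g).symm, natCard_sigma]
  rw [hcard1, show (m + 1 - 1) = m from rfl,
    reindex (fun i => (Nat.card {t : Fin (m+1) → ℕ //
      (∑ j, a j * t j = b % M + (i - 1) * M) ∧ ∀ j, t j ≤ M / a j - 1}) *
      Cm ((b / M : ℕ) + 2 - (i : ℤ)) m)]
  apply Finset.sum_congr rfl
  intro i _
  have e1 : i.1 + 1 - 1 = i.1 := rfl
  have e2 : ((b / M : ℕ) : ℤ) + 2 - ((i.1 + 1 : ℕ) : ℤ)
      = ((b / M : ℕ) : ℤ) + 1 - (i.1 : ℤ) := by push_cast; ring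
  rw [e1, e2, hfiber i, hY i]
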